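/- With the same notation, let g_0^f(h,k) = Hom(V_+ ∩ (F^t)^h V_−, V_− ∩ F^k V_+) ⊂ End(V) for 0 ≤ h,k ≤ p_1−1. If ℓ > min(h,k), then φ_ℓ vanishes on g_0^f(h,k), and if ℓ ≤ min(h,k), then the restriction of φ_ℓ to g_0^f(h,k) is injective. -/

import Mathlib

/-- A "box" of the pyramid attached to the partition `p₁^{r₁} ⋯ p_s^{r_s}`. The last
coordinate is the position of the box in its row, counted from the right
(`0` = rightmost box). -/
abbrev PyramidBox {s : ℕ} (p r : Fin s → ℕ) : Type := (i : Fin s) × (Fin (r i) × Fin (p i))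

/-- with `Qplus h` the projection onto `V₊ ∩ (Fᵗ)^h V₋` (rightmost boxes of rows
of length `h+1`) and `Qminus k` the projection onto `V₋ ∩ F^k V₊` (leftmost boxes of rows of
length `k+1`), let `g₀^f(h,k) = {A | A = 1_{V₋ ∩ F^k V₊} A 1_{V₊ ∩ (Fᵗ)^h V₋}}`.
If `ℓ > min h k` then `φ_ℓ` vanishes on `g₀^f(h,k)`, and if `ℓ ≤ min h k` then the
restriction of `φ_ℓ` to `g₀^f(h,k)` is injective. -/
theorem stmt4 {K : Type*} [Field K] [CharZero K]
    {V : Type*} [AddCommGroup V] [Module K V]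
    {s : ℕ} (hs : 0 < s) (p r : Fin s → ℕ) (hp : StrictAnti p)
    (b : Module.Basis (PyramidBox p r) K V)
    (F Ft : Module.End K V) (Qplus Qminus : ℕ → Module.End K V)
    (hF : ∀ x : PyramidBox p r,
      F (b x) = if h : (x.2.2 : ℕ) + 1 < p x.1
        then b ⟨x.1, x.2.1, ⟨(x.2.2 : ℕ) + 1, h⟩⟩ else 0)
    (hFt : ∀ x : PyramidBox p r,
      Ft (b x) = if 0 < (x.2.2 : ℕ)
        then b ⟨x.1, x.2.1, ⟨(x.2.2 : ℕ) - 1, Nat.lt_of_le_of_lt (Nat.sub_le _ _) x.2.2.isLt⟩⟩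
        else 0)
    (hQplus : ∀ (n : ℕ) (x : PyramidBox p r),
      Qplus n (b x) = if ((x.2.2 : ℕ) = 0 ∧ p x.1 = n + 1) then b x else 0)
    (hQminus : ∀ (n : ℕ) (x : PyramidBox p r),
      Qminus n (b x) = if ((x.2.2 : ℕ) + 1 = p x.1 ∧ p x.1 = n + 1) then b x else 0)
    (h k ℓ : ℕ) (hh : h < p ⟨0, hs⟩) (hk : k < p ⟨0, hs⟩) :
    (min h k < ℓ → ∀ A : Module.End K V, Qminus k * A * Qplus h = A →
        ∑ i ∈ Finset.range (ℓ + 1), F ^ i * Ft ^ ℓ * A * Ft ^ ℓ * F ^ (ℓ - i) = 0) ∧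
    (ℓ ≤ min h k → ∀ A : Module.End K V, Qminus k * A * Qplus h = A →
        (∑ i ∈ Finset.range (ℓ + 1), F ^ i * Ft ^ ℓ * A * Ft ^ ℓ * F ^ (ℓ - i)) = 0 → A = 0) := by
  classical
  -- destructured versions of the hypotheses
  have hF' : ∀ (i : Fin s) (j : Fin (r i)) (a : ℕ) (ha : a < p i),
      F (b ⟨i, j, ⟨a, ha⟩⟩) = if h2 : a + 1 < p i then b ⟨i, j, ⟨a + 1, h2⟩⟩ else 0 :=
    fun i j a ha => hF ⟨i, j, ⟨a, ha⟩⟩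
  have hFt' : ∀ (i : Fin s) (j : Fin (r i)) (a : ℕ) (ha : a < p i),
      Ft (b ⟨i, j, ⟨a, ha⟩⟩) = if 0 < a then
        b ⟨i, j, ⟨a - 1, Nat.lt_of_le_of_lt (Nat.sub_le _ _) ha⟩⟩ else 0 :=
    fun i j a ha => hFt ⟨i, j, ⟨a, ha⟩⟩
  have hQplus' : ∀ (n : ℕ) (i : Fin s) (j : Fin (r i)) (a : ℕ) (ha : a < p i),
      Qplus n (b ⟨i, j, ⟨a, ha⟩⟩) = if (a = 0 ∧ p i = n + 1) then b ⟨i, j, ⟨a, ha⟩⟩ else 0 :=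
    fun n i j a ha => hQplus n ⟨i, j, ⟨a, ha⟩⟩
  have hQminus' : ∀ (n : ℕ) (i : Fin s) (j : Fin (r i)) (a : ℕ) (ha : a < p i),
      Qminus n (b ⟨i, j, ⟨a, ha⟩⟩) = if (a + 1 = p i ∧ p i = n + 1) then b ⟨i, j, ⟨a, ha⟩⟩ else 0 :=
    fun n i j a ha => hQminus n ⟨i, j, ⟨a, ha⟩⟩
  have boxeq : ∀ (i : Fin s) (j : Fin (r i)) (a a' : ℕ) (ha : a < p i) (ha' : a' < p i),
      a = a' → b ⟨i, j, ⟨a, ha⟩⟩ = b ⟨i, j, ⟨a', ha'⟩⟩ := by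
    intro i j a a' ha ha' hE; subst hE; rfl
  -- powers of F
  have hFpow : ∀ (m : ℕ) (i : Fin s) (j : Fin (r i)) (a : ℕ) (ha : a < p i),
      (F ^ m) (b ⟨i, j, ⟨a, ha⟩⟩) =
      if hm : a + m < p i then b ⟨i, j, ⟨a + m, hm⟩⟩ else 0 := by
    intro m
    induction m with
    | zero =>
      intro i j a ha
      rw [pow_zero, Module.End.one_apply, dif_pos (by omega)]
      exact boxeq _ _ _ _ _ _ (by omega)
    | succ n ih =>
      intro i j a ha
      rw [pow_succ', Module.End.mul_apply, ih i j a ha]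
      by_cases h1 : a + n < p i
      · rw [dif_pos h1, hF' i j (a + n) h1]
        by_cases h2 : a + (n + 1) < p i
        · rw [dif_pos (by omega : a + n + 1 < p i), dif_pos h2]
          exact boxeq _ _ _ _ _ _ (by omega)
        · rw [dif_neg (by omega : ¬ a + n + 1 < p i), dif_neg h2]
      · rw [dif_neg h1, map_zero, dif_neg (by omega)]
  -- powers of Ft
  have hFtpow : ∀ (m : ℕ) (i : Fin s) (j : Fin (r i)) (a : ℕ) (ha : a < p i),
      (Ft ^ m) (b ⟨i, j, ⟨a, ha⟩⟩) =
      if m ≤ a then b ⟨i, j, ⟨a - m, Nat.lt_of_le_of_lt (Nat.sub_le _ _) ha⟩⟩ else 0 := by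
    intro m
    induction m with
    | zero =>
      intro i j a ha
      rw [pow_zero, Module.End.one_apply, if_pos (Nat.zero_le _)]
      exact boxeq _ _ _ _ _ _ (by omega)
    | succ n ih =>
      intro i j a ha
      rw [pow_succ', Module.End.mul_apply, ih i j a ha]
      by_cases h1 : n ≤ a
      · rw [if_pos h1, hFt' i j (a - n) _]
        by_cases h2 : n + 1 ≤ a
        · rw [if_pos (by omega : 0 < a - n), if_pos h2]
          exact boxeq _ _ _ _ _ _ (by omega)
        · rw [if_neg (by omega : ¬ 0 < a - n), if_neg h2]
      · rw [if_neg h1, map_zero, if_neg (by omega)]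
  constructor
  · -- vanishing
    intro hmin A hA
    rcases min_lt_iff.mp hmin with hlt | hlt
    · -- h < ℓ : Qplus h * Ft^ℓ = 0
      have h0 : Qplus h * Ft ^ ℓ = 0 := by
        apply b.ext
        rintro ⟨i, j, a, ha⟩
        rw [Module.End.mul_apply, hFtpow ℓ i j a ha, LinearMap.zero_apply]
        split_ifs with hx
        · rw [hQplus', if_neg (by omega)]
        · simp
      apply Finset.sum_eq_zero
      intro i _
      rw [← hA]
      simp only [mul_assoc]
      rw [← mul_assoc (Qplus h) (Ft ^ ℓ), h0]
      simp
    · -- k < ℓ : Ft^ℓ * Qminus k = 0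
      have h0 : Ft ^ ℓ * Qminus k = 0 := by
        apply b.ext
        rintro ⟨i, j, a, ha⟩
        rw [Module.End.mul_apply, hQminus', LinearMap.zero_apply]
        split_ifs with hx
        · rw [hFtpow, if_neg (by omega)]
        · simp
      apply Finset.sum_eq_zero
      intro i _
      rw [← hA]
      simp only [mul_assoc]
      rw [← mul_assoc (Ft ^ ℓ) (Qminus k), h0]
      simp
  · -- injectivity
    intro hmin A hA hsum
    have hℓh : ℓ ≤ h := le_trans hmin (min_le_left _ _)
    have hℓk : ℓ ≤ k := le_trans hmin (min_le_right _ _)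
    -- recovery: F^ℓ ∘ Ft^ℓ is identity on the image of Qminus k
    have hrec : F ^ ℓ * (Ft ^ ℓ * Qminus k) = Qminus k := by
      apply b.ext
      rintro ⟨i, j, a, ha⟩
      simp only [Module.End.mul_apply, hQminus']
      split_ifs with hx
      · rw [hFtpow ℓ i j a ha, if_pos (show ℓ ≤ a by omega), hFpow ℓ i j (a - ℓ) _,
          dif_pos (show a - ℓ + ℓ < p i by omega)]
        exact boxeq _ _ _ _ _ _ (by omega)
      · simp
    apply b.ext
    rintro ⟨i, j, a, ha⟩
    rw [LinearMap.zero_apply]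
    have hAx : A (b ⟨i, j, ⟨a, ha⟩⟩) = Qminus k (A (Qplus h (b ⟨i, j, ⟨a, ha⟩⟩))) := by
      conv_lhs => rw [← hA]
      rfl
    by_cases hx : a = 0 ∧ p i = h + 1
    · have hb : Qplus h (b ⟨i, j, ⟨a, ha⟩⟩) = b ⟨i, j, ⟨a, ha⟩⟩ := by
        rw [hQplus', if_pos hx]
      have hQw : Qminus k (A (b ⟨i, j, ⟨a, ha⟩⟩)) = A (b ⟨i, j, ⟨a, ha⟩⟩) := by
        conv_rhs => rw [hAx, hb]
      have h1 : ∑ n ∈ Finset.range (ℓ + 1),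
          (F ^ n * Ft ^ ℓ * A * Ft ^ ℓ * F ^ (ℓ - n)) (b ⟨i, j, ⟨a, ha⟩⟩) = 0 := by
        rw [← LinearMap.sum_apply, hsum, LinearMap.zero_apply]
      have h3 : (Ft ^ ℓ) (A (b ⟨i, j, ⟨a, ha⟩⟩)) = 0 := by
        have hterm : ∀ n ∈ Finset.range (ℓ + 1),
            (F ^ n * Ft ^ ℓ * A * Ft ^ ℓ * F ^ (ℓ - n)) (b ⟨i, j, ⟨a, ha⟩⟩) =
            if n = 0 then (Ft ^ ℓ) (A (b ⟨i, j, ⟨a, ha⟩⟩)) else 0 := by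
          intro n hn
          have hn' : n ≤ ℓ := by have := Finset.mem_range.mp hn; omega
          by_cases hn0 : n = 0
          · subst hn0
            rw [if_pos rfl]
            simp only [Module.End.mul_apply, pow_zero, Nat.sub_zero, Module.End.one_apply]
            rw [hFpow ℓ i j a ha, dif_pos (show a + ℓ < p i by omega), hFtpow ℓ i j (a + ℓ) _,
              if_pos (show ℓ ≤ a + ℓ by omega)]
            rw [boxeq i j (a + ℓ - ℓ) a _ ha (by omega)]
          · rw [if_neg hn0]
            simp only [Module.End.mul_apply]
            rw [hFpow (ℓ - n) i j a ha, dif_pos (show a + (ℓ - n) < p i by omega),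
              hFtpow ℓ i j (a + (ℓ - n)) _,
              if_neg (show ¬ ℓ ≤ a + (ℓ - n) by omega)]
            simp
        rw [Finset.sum_congr rfl hterm] at h1
        simpa using h1
      calc A (b ⟨i, j, ⟨a, ha⟩⟩) = Qminus k (A (b ⟨i, j, ⟨a, ha⟩⟩)) := hQw.symm
        _ = (F ^ ℓ * (Ft ^ ℓ * Qminus k)) (A (b ⟨i, j, ⟨a, ha⟩⟩)) := by rw [hrec]
        _ = (F ^ ℓ) ((Ft ^ ℓ) (Qminus k (A (b ⟨i, j, ⟨a, ha⟩⟩)))) := rfl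
        _ = (F ^ ℓ) ((Ft ^ ℓ) (A (b ⟨i, j, ⟨a, ha⟩⟩))) := by rw [hQw]
        _ = 0 := by rw [h3, map_zero]
    · rw [hAx, hQplus', if_neg hx, map_zero, map_zero]
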